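/- For all integers K ≥ 3 and S ≥ 1, define K₁* = ⌊√(S − 3/4) + 3/2⌋, K₂* = ⌊√S + 2⌋, K₃* = ⌊√S + 1⌋, the ST-PNC inner bound D_ST(K,S) = min{ K/2, max( K₁*/2, K₂*(K₂*−2)/(2K₂*−3), (K₃*)²/(2K₃*−1) ) }, and the G-OF sum-DoF D_GOF(K,S) = min{ K, ⌊√S + 1⌋ }/2. Then D_ST(K,S) ≥ D_GOF(K,S). -/
import Mathlib


/-- ST-PNC dominates G-OF (Section IV-B): for all integers `K ≥ 3` and `S ≥ 1`,
the ST-PNC inner bound of Theorem 3 is at least the G-OF sum-DoF of Lemma 2. -/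
theorem STPNC_ge_GOF (K S : ℕ) (hK : 3 ≤ K) (hS : 1 ≤ S) :
    min ((K : ℝ) / 2)
      (max (((⌊Real.sqrt ((S : ℝ) - 3 / 4) + 3 / 2⌋ : ℤ) : ℝ) / 2)
        (max
          (((⌊Real.sqrt (S : ℝ) + 2⌋ : ℤ) : ℝ) * (((⌊Real.sqrt (S : ℝ) + 2⌋ : ℤ) : ℝ) - 2)
              / (2 * ((⌊Real.sqrt (S : ℝ) + 2⌋ : ℤ) : ℝ) - 3))
          (((⌊Real.sqrt (S : ℝ) + 1⌋ : ℤ) : ℝ) ^ 2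
              / (2 * ((⌊Real.sqrt (S : ℝ) + 1⌋ : ℤ) : ℝ) - 1)))) ≥
    min (K : ℝ) ((⌊Real.sqrt (S : ℝ) + 1⌋ : ℤ) : ℝ) / 2 := by
  have hs1 : (1 : ℝ) ≤ Real.sqrt (S : ℝ) := by
    rw [show (1:ℝ) = Real.sqrt 1 by simp]
    exact Real.sqrt_le_sqrt (by exact_mod_cast hS)
  set a : ℤ := ⌊Real.sqrt (S : ℝ) + 1⌋ with ha
  have ha2 : (2 : ℤ) ≤ a := Int.le_floor.mpr (by push_cast; linarith)
  have ha2R : (2 : ℝ) ≤ (a : ℝ) := by exact_mod_cast ha2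
  have h1 : (a : ℝ) / 2 ≤ (a : ℝ) ^ 2 / (2 * (a : ℝ) - 1) := by
    rw [div_le_div_iff₀ (by norm_num) (by linarith)]
    nlinarith
  have hmax : (a : ℝ) / 2 ≤
      max (((⌊Real.sqrt ((S : ℝ) - 3 / 4) + 3 / 2⌋ : ℤ) : ℝ) / 2)
        (max
          (((⌊Real.sqrt (S : ℝ) + 2⌋ : ℤ) : ℝ) * (((⌊Real.sqrt (S : ℝ) + 2⌋ : ℤ) : ℝ) - 2)
              / (2 * ((⌊Real.sqrt (S : ℝ) + 2⌋ : ℤ) : ℝ) - 3))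
          ((a : ℝ) ^ 2 / (2 * (a : ℝ) - 1))) :=
    le_trans h1 (le_trans (le_max_right _ _) (le_max_right _ _))
  calc min (K : ℝ) (a : ℝ) / 2 = min ((K : ℝ) / 2) ((a : ℝ) / 2) := by
        rw [min_div_div_right (by norm_num : (0:ℝ) ≤ 2)]
    _ ≤ _ := min_le_min le_rfl hmax
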